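/- Let T be a finite tree rooted at r, with East-on-tree constraints c̃_x(ω)=1 iff x=r or ω_y=0 where y is the ancestor of x in T. Let v be any vertex of T, a a child of v, Γ_v the set of vertices on the path in T from r to v, and T_a the subtree of T rooted at a. Set A := Γ_v ∪ T_a (a tree rooted at r) and B := T ∖ T_a (a tree rooted at r). Then gap(T,r,East) ≥ min( gap(A,r,East), gap(B,r,East) ), where each gap is that of the corresponding East-on-tree model at the same parameter q∈(0,1). -/

import Mathlib

open scoped Classical BigOperators

set_option linter.unusedSectionVars false
set_option linter.unusedVariables false
set_option maxHeartbeats 1000000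

noncomputable section

def ind (P : Prop) : ℝ := if P then 1 else 0

def varAt {ι : Type*} [DecidableEq ι] (q : ℝ) (f : (ι → Bool) → ℝ) (x : ι) (ω : ι → Bool) : ℝ :=
  (1 - q) * q * (f (Function.update ω x true) - f (Function.update ω x false)) ^ 2

variable {V : Type*} [Fintype V] [DecidableEq V]

/-- Expectation under the product Bernoulli measure on `{0,1}^V` (a site is empty,
i.e. `false`, with probability `q`). -/
def finExp (q : ℝ) (f : (V → Bool) → ℝ) : ℝ :=
  ∑ ω : V → Bool, (∏ x : V, if ω x then 1 - q else q) * f ω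

/-- Variance under the product Bernoulli measure. -/
def finVar (q : ℝ) (f : (V → Bool) → ℝ) : ℝ :=
  finExp q (fun ω => (f ω) ^ 2) - (finExp q f) ^ 2

/-- Dirichlet form `D(f) = Σ_{x ∈ V} μ(c_x · Var_x f)`. -/
def finDir (q : ℝ) (c : V → (V → Bool) → Prop) (f : (V → Bool) → ℝ) : ℝ :=
  ∑ x : V, finExp q (fun ω => ind (c x ω) * varAt q f x ω)

/-- Spectral gap of a finite-volume kinetically constrained model. -/
def finGap (q : ℝ) (c : V → (V → Bool) → Prop) : ℝ :=
  sInf { γ : ℝ | ∃ f : (V → Bool) → ℝ, (∃ ω ω', f ω ≠ f ω') ∧ γ = finDir q c f / finVar q f }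

end

open scoped Classical in
/-- The East-on-tree constraint on the subtree spanned by the finite set `S` of a rooted
tree with parent map `parent` and root `rt`: a vertex may be updated iff it is the root
or its ancestor carries a `0`. -/
def treeEastC {V : Type*} (parent : V → V) (rt : V) (S : Finset V)
    (x : {y // y ∈ S}) (ω : {y // y ∈ S} → Bool) : Prop :=
  (x : V) = rt ∨ ∃ h : parent (x : V) ∈ S, ω ⟨parent (x : V), h⟩ = false

namespace TE


open Finset Function

noncomputable section

variable {ι : Type*} [Fintype ι] [DecidableEq ι]

def wt (q : ℝ) (ω : ι → Bool) : ℝ := ∏ x : ι, if ω x then 1 - q else q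

lemma finExp_def (q : ℝ) (f : (ι → Bool) → ℝ) :
    finExp q f = ∑ ω : ι → Bool, wt q ω * f ω := rfl

variable {q : ℝ}

lemma wt_pos (hq0 : 0 < q) (hq1 : q < 1) (ω : ι → Bool) : 0 < wt q ω := by
  refine Finset.prod_pos fun x _ => ?_
  cases ω x <;> simp [hq0, hq1, sub_pos]

lemma wt_nonneg (hq0 : 0 < q) (hq1 : q < 1) (ω : ι → Bool) : 0 ≤ wt q ω :=
  (wt_pos hq0 hq1 ω).le

lemma sum_wt : ∑ ω : ι → Bool, wt q ω = 1 := by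
  have h := Finset.prod_univ_sum (fun _ : ι => (Finset.univ : Finset Bool))
    (fun _ b => if b then 1 - q else q)
  rw [Fintype.piFinset_univ] at h
  have : ∑ ω : ι → Bool, wt q ω
      = ∑ ω : ι → Bool, ∏ x : ι, (if ω x then 1 - q else q) := rfl
  rw [this, ← h]
  simp

lemma finExp_congr {f g : (ι → Bool) → ℝ} (h : ∀ ω, f ω = g ω) :
    finExp q f = finExp q g := by
  unfold finExp; exact Finset.sum_congr rfl fun ω _ => by rw [h ω]

lemma finExp_add (f g : (ι → Bool) → ℝ) :
    finExp q (fun ω => f ω + g ω) = finExp q f + finExp q g := by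
  unfold finExp; rw [← Finset.sum_add_distrib]
  exact Finset.sum_congr rfl fun ω _ => by ring

lemma finExp_sub (f g : (ι → Bool) → ℝ) :
    finExp q (fun ω => f ω - g ω) = finExp q f - finExp q g := by
  unfold finExp; rw [← Finset.sum_sub_distrib]
  exact Finset.sum_congr rfl fun ω _ => by ring

lemma finExp_smul (k : ℝ) (f : (ι → Bool) → ℝ) :
    finExp q (fun ω => k * f ω) = k * finExp q f := by
  unfold finExp; rw [Finset.mul_sum]
  exact Finset.sum_congr rfl fun ω _ => by ring

lemma finExp_const (k : ℝ) : finExp q (fun _ : ι → Bool => k) = k := by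
  unfold finExp
  rw [← Finset.sum_mul]
  rw [show (∑ ω : ι → Bool, ∏ x : ι, if ω x then 1 - q else q) = ∑ ω : ι → Bool, wt q ω from rfl,
    sum_wt, one_mul]

lemma finExp_sumFin {α : Type*} (s : Finset α) (F : α → (ι → Bool) → ℝ) :
    finExp q (fun ω => ∑ x ∈ s, F x ω) = ∑ x ∈ s, finExp q (F x) := by
  unfold finExp
  have : ∀ ω : ι → Bool, (∏ x : ι, if ω x then 1 - q else q) * (∑ x ∈ s, F x ω)
      = ∑ x ∈ s, (∏ y : ι, if ω y then 1 - q else q) * F x ω := fun ω => Finset.mul_sum _ _ _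
  simp only [this]
  exact Finset.sum_comm

lemma finExp_mono (hq0 : 0 < q) (hq1 : q < 1) {f g : (ι → Bool) → ℝ}
    (h : ∀ ω, f ω ≤ g ω) : finExp q f ≤ finExp q g :=
  Finset.sum_le_sum fun ω _ => mul_le_mul_of_nonneg_left (h ω) (wt_nonneg hq0 hq1 ω)

lemma finExp_nonneg (hq0 : 0 < q) (hq1 : q < 1) {f : (ι → Bool) → ℝ}
    (h : ∀ ω, 0 ≤ f ω) : 0 ≤ finExp q f := by
  have := finExp_mono (ι := ι) hq0 hq1 (f := fun _ => (0:ℝ)) (g := f) h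
  rwa [finExp_const] at this

lemma finExp_eq_zero (hq0 : 0 < q) (hq1 : q < 1) {f : (ι → Bool) → ℝ}
    (h : ∀ ω, 0 ≤ f ω) (h0 : finExp q f = 0) : ∀ ω, f ω = 0 := by
  intro ω
  have hz := (Finset.sum_eq_zero_iff_of_nonneg
    (fun ω _ => mul_nonneg (wt_nonneg hq0 hq1 ω) (h ω))).1 h0 ω (Finset.mem_univ ω)
  rcases mul_eq_zero.1 hz with h' | h'
  · exact absurd h' (wt_pos hq0 hq1 ω).ne'
  · exact h'

lemma finVar_eq (f : (ι → Bool) → ℝ) :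
    finVar q f = finExp q (fun ω => (f ω - finExp q f) ^ 2) := by
  have : (fun ω => (f ω - finExp q f) ^ 2)
      = fun ω => (f ω) ^ 2 - (2 * finExp q f) * f ω + (finExp q f) ^ 2 := by
    funext ω; ring
  rw [finVar, this, finExp_add, finExp_sub, finExp_smul, finExp_const]
  ring

lemma finVar_nonneg (hq0 : 0 < q) (hq1 : q < 1) (f : (ι → Bool) → ℝ) :
    0 ≤ finVar q f := by
  rw [finVar_eq]; exact finExp_nonneg hq0 hq1 fun ω => sq_nonneg _

lemma finVar_pos (hq0 : 0 < q) (hq1 : q < 1) {f : (ι → Bool) → ℝ}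
    (h : ∃ ω ω', f ω ≠ f ω') : 0 < finVar q f := by
  obtain ⟨ω, ω', hne⟩ := h
  have hone : f ω ≠ finExp q f ∨ f ω' ≠ finExp q f := by
    by_contra hc; push_neg at hc; exact hne (hc.1.trans hc.2.symm)
  rw [finVar_eq]
  have key : ∀ ζ : ι → Bool, f ζ ≠ finExp q f → 0 < finExp q (fun ω => (f ω - finExp q f) ^ 2) := by
    intro ζ hζ
    have hne0 : f ζ - finExp q f ≠ 0 := sub_ne_zero.2 hζ
    have hterm : 0 < wt q ζ * (f ζ - finExp q f) ^ 2 :=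
      mul_pos (wt_pos hq0 hq1 ζ) (by positivity)
    calc (0:ℝ) < wt q ζ * (f ζ - finExp q f) ^ 2 := hterm
      _ ≤ ∑ ω : ι → Bool, wt q ω * (f ω - finExp q f) ^ 2 :=
        Finset.single_le_sum (f := fun ω => wt q ω * (f ω - finExp q f) ^ 2)
          (fun ω _ => mul_nonneg (wt_nonneg hq0 hq1 ω) (sq_nonneg _)) (Finset.mem_univ ζ)
  rcases hone with h' | h'
  · exact key ω h'
  · exact key ω' h'

lemma finVar_of_const {f : (ι → Bool) → ℝ} (h : ∀ ω ω', f ω = f ω') :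
    finVar q f = 0 := by
  rw [finVar_eq]
  classical
  by_cases hne : Nonempty (ι → Bool)
  · obtain ⟨ω₀⟩ := hne
    have hf : ∀ ω, f ω = f ω₀ := fun ω => h ω ω₀
    have hE : finExp q f = f ω₀ := by
      rw [finExp_congr (g := fun _ => f ω₀) hf, finExp_const]
    rw [finExp_congr (g := fun _ => (0:ℝ)) (fun ω => by rw [hf ω, hE]; ring), finExp_const]
  · exact absurd ⟨fun _ => true⟩ hne

end

end TE

namespace TE

open Finset Function

noncomputable section

variable {ι : Type*} [Fintype ι] [DecidableEq ι] {q : ℝ}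

/-- glue a value at `x` with a configuration off `x`. -/
def mixAt (x : ι) (b : Bool) (τ : {j // j ≠ x} → Bool) : ι → Bool :=
  (Equiv.piSplitAt x (fun _ => Bool)).symm (b, τ)

lemma mixAt_self (x : ι) (b : Bool) (τ : {j // j ≠ x} → Bool) : mixAt x b τ x = b := by
  simp [mixAt, Equiv.piSplitAt]

lemma mixAt_ne (x : ι) (b : Bool) (τ : {j // j ≠ x} → Bool) {y : ι} (h : y ≠ x) :
    mixAt x b τ y = τ ⟨y, h⟩ := by
  simp [mixAt, Equiv.piSplitAt, h]

lemma update_mixAt (x : ι) (b b' : Bool) (τ : {j // j ≠ x} → Bool) :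
    Function.update (mixAt x b τ) x b' = mixAt x b' τ := by
  funext y
  by_cases h : y = x
  · subst h; rw [Function.update_self, mixAt_self]
  · rw [Function.update_of_ne h, mixAt_ne x b τ h, mixAt_ne x b' τ h]

lemma wt_mixAt (x : ι) (b : Bool) (τ : {j // j ≠ x} → Bool) :
    wt q (mixAt x b τ) = (if b then 1 - q else q) * wt q τ := by
  unfold wt
  rw [← Finset.mul_prod_erase (Finset.univ) _ (Finset.mem_univ x), mixAt_self]
  congr 1
  rw [Finset.prod_subtype (Finset.univ.erase x) (p := fun j => j ≠ x) (by simp)]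
  exact Finset.prod_congr rfl fun j _ => by rw [mixAt_ne x b τ j.2]

lemma core1 (x : ι) (F : (ι → Bool) → ℝ) :
    finExp q F = ∑ τ : {j // j ≠ x} → Bool,
      wt q τ * ((1 - q) * F (mixAt x true τ) + q * F (mixAt x false τ)) := by
  rw [finExp_def]
  rw [← Equiv.sum_comp (Equiv.piSplitAt x (fun _ => Bool)).symm (fun ω => wt q ω * F ω)]
  rw [Fintype.sum_prod_type]
  rw [Fintype.sum_bool]
  rw [← Finset.sum_add_distrib]
  refine Finset.sum_congr rfl fun τ _ => ?_
  show wt q (mixAt x true τ) * F (mixAt x true τ) + wt q (mixAt x false τ) * F (mixAt x false τ) = _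
  rw [wt_mixAt, wt_mixAt]
  norm_num
  ring

/-- one-site part of (minus) the generator. -/
def oneStep (q : ℝ) (x : ι) (f : (ι → Bool) → ℝ) (ω : ι → Bool) : ℝ :=
  f ω - ((1 - q) * f (Function.update ω x true) + q * f (Function.update ω x false))

def Lneg (q : ℝ) (c : ι → (ι → Bool) → Prop) (f : (ι → Bool) → ℝ) (ω : ι → Bool) : ℝ :=
  ∑ x : ι, ind (c x ω) * oneStep q x f ω

lemma dirx (x : ι) (P : (ι → Bool) → Prop) (hP : ∀ ω b, P (Function.update ω x b) ↔ P ω)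
    (f : (ι → Bool) → ℝ) :
    finExp q (fun ω => ind (P ω) * varAt q f x ω)
      = finExp q (fun ω => ind (P ω) * (f ω * oneStep q x f ω)) := by
  rw [core1 x, core1 x]
  refine Finset.sum_congr rfl fun τ _ => ?_
  have hup : ∀ b b' : Bool, Function.update (mixAt x b τ) x b' = mixAt x b' τ := fun b b' =>
    update_mixAt x b b' τ
  have hPmix : ∀ b : Bool, P (mixAt x b τ) ↔ P (mixAt x true τ) := by
    intro b
    rw [← hup true b]
    exact hP _ b
  have hind : ∀ b : Bool, ind (P (mixAt x b τ)) = ind (P (mixAt x true τ)) := fun b => by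
    unfold ind
    by_cases h : P (mixAt x true τ) <;> simp [h, (hPmix b)]
  simp only [varAt, oneStep, hup, hind]
  ring

lemma symx (x : ι) (P : (ι → Bool) → Prop) (hP : ∀ ω b, P (Function.update ω x b) ↔ P ω)
    (f g : (ι → Bool) → ℝ) :
    finExp q (fun ω => ind (P ω) * (g ω * oneStep q x f ω))
      = finExp q (fun ω => ind (P ω) * (f ω * oneStep q x g ω)) := by
  rw [core1 x, core1 x]
  refine Finset.sum_congr rfl fun τ _ => ?_
  have hup : ∀ b b' : Bool, Function.update (mixAt x b τ) x b' = mixAt x b' τ := fun b b' =>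
    update_mixAt x b b' τ
  have hPmix : ∀ b : Bool, P (mixAt x b τ) ↔ P (mixAt x true τ) := by
    intro b
    rw [← hup true b]
    exact hP _ b
  have hind : ∀ b : Bool, ind (P (mixAt x b τ)) = ind (P (mixAt x true τ)) := fun b => by
    unfold ind
    by_cases h : P (mixAt x true τ) <;> simp [h, (hPmix b)]
  simp only [oneStep, hup, hind]
  ring

lemma ortho (x : ι) (G f : (ι → Bool) → ℝ) (hG : ∀ ω b, G (Function.update ω x b) = G ω) :
    finExp q (fun ω => G ω * oneStep q x f ω) = 0 := by
  rw [core1 x]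
  refine Finset.sum_eq_zero fun τ _ => ?_
  have hup : ∀ b b' : Bool, Function.update (mixAt x b τ) x b' = mixAt x b' τ := fun b b' =>
    update_mixAt x b b' τ
  have hGmix : ∀ b : Bool, G (mixAt x b τ) = G (mixAt x true τ) := by
    intro b
    rw [← hup true b]
    exact hG _ b
  simp only [oneStep, hup, hGmix]
  ring

lemma dir_eq (c : ι → (ι → Bool) → Prop)
    (HC : ∀ x ω b, c x (Function.update ω x b) ↔ c x ω) (f : (ι → Bool) → ℝ) :
    finDir q c f = finExp q (fun ω => f ω * Lneg q c f ω) := by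
  unfold finDir
  have h1 : ∀ x : ι, finExp q (fun ω => ind (c x ω) * varAt q f x ω)
      = finExp q (fun ω => ind (c x ω) * (f ω * oneStep q x f ω)) := fun x =>
    dirx x (c x) (HC x) f
  simp only [h1]
  rw [show (Finset.univ : Finset ι) = Finset.univ from rfl]
  rw [← finExp_sumFin Finset.univ (fun x ω => ind (c x ω) * (f ω * oneStep q x f ω))]
  refine finExp_congr fun ω => ?_
  unfold Lneg
  rw [Finset.mul_sum]
  exact Finset.sum_congr rfl fun x _ => by ring

lemma sym_lneg (c : ι → (ι → Bool) → Prop)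
    (HC : ∀ x ω b, c x (Function.update ω x b) ↔ c x ω) (f g : (ι → Bool) → ℝ) :
    finExp q (fun ω => g ω * Lneg q c f ω) = finExp q (fun ω => f ω * Lneg q c g ω) := by
  have h1 : finExp q (fun ω => g ω * Lneg q c f ω)
      = ∑ x : ι, finExp q (fun ω => ind (c x ω) * (g ω * oneStep q x f ω)) := by
    rw [← finExp_sumFin]
    refine finExp_congr fun ω => ?_
    unfold Lneg; rw [Finset.mul_sum]; exact Finset.sum_congr rfl fun x _ => by ring
  have h2 : finExp q (fun ω => f ω * Lneg q c g ω)
      = ∑ x : ι, finExp q (fun ω => ind (c x ω) * (f ω * oneStep q x g ω)) := by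
    rw [← finExp_sumFin]
    refine finExp_congr fun ω => ?_
    unfold Lneg; rw [Finset.mul_sum]; exact Finset.sum_congr rfl fun x _ => by ring
  rw [h1, h2]
  exact Finset.sum_congr rfl fun x _ => symx x (c x) (HC x) f g

lemma lneg_const (c : ι → (ι → Bool) → Prop) (k : ℝ) (ω : ι → Bool) :
    Lneg q c (fun _ => k) ω = 0 := by
  unfold Lneg oneStep
  refine Finset.sum_eq_zero fun x _ => by ring

lemma lneg_congr (c : ι → (ι → Bool) → Prop) {f g : (ι → Bool) → ℝ} (h : ∀ ω, f ω = g ω)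
    (ω : ι → Bool) : Lneg q c f ω = Lneg q c g ω := by
  have : f = g := funext h
  rw [this]

lemma lneg_sub_const (c : ι → (ι → Bool) → Prop) (f : (ι → Bool) → ℝ) (k : ℝ) (ω : ι → Bool) :
    Lneg q c (fun ζ => f ζ - k) ω = Lneg q c f ω := by
  unfold Lneg oneStep
  refine Finset.sum_congr rfl fun x _ => by ring

lemma lneg_add (c : ι → (ι → Bool) → Prop) (f g : (ι → Bool) → ℝ) (ω : ι → Bool) :
    Lneg q c (fun ζ => f ζ + g ζ) ω = Lneg q c f ω + Lneg q c g ω := by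
  unfold Lneg oneStep
  rw [← Finset.sum_add_distrib]
  exact Finset.sum_congr rfl fun x _ => by ring

lemma lneg_smul (c : ι → (ι → Bool) → Prop) (k : ℝ) (f : (ι → Bool) → ℝ) (ω : ι → Bool) :
    Lneg q c (fun ζ => k * f ζ) ω = k * Lneg q c f ω := by
  unfold Lneg oneStep
  rw [Finset.mul_sum]
  exact Finset.sum_congr rfl fun x _ => by ring

lemma dir_shift (c : ι → (ι → Bool) → Prop) (f : (ι → Bool) → ℝ) (k : ℝ) :
    finDir q c (fun ζ => f ζ - k) = finDir q c f := by
  unfold finDir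
  refine Finset.sum_congr rfl fun x _ => finExp_congr fun ω => ?_
  unfold varAt
  ring

lemma finDir_nonneg (hq0 : 0 < q) (hq1 : q < 1) (c : ι → (ι → Bool) → Prop)
    (f : (ι → Bool) → ℝ) : 0 ≤ finDir q c f := by
  refine Finset.sum_nonneg fun x _ => finExp_nonneg hq0 hq1 fun ω => ?_
  refine mul_nonneg ?_ ?_
  · unfold ind; positivity
  · unfold varAt
    have h1 : (0:ℝ) ≤ 1 - q := by linarith
    positivity

lemma gap_nonneg_mem (hq0 : 0 < q) (hq1 : q < 1) (c : ι → (ι → Bool) → Prop) :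
    ∀ γ ∈ { γ : ℝ | ∃ f : (ι → Bool) → ℝ, (∃ ω ω', f ω ≠ f ω') ∧
      γ = finDir q c f / finVar q f }, 0 ≤ γ := by
  rintro γ ⟨f, hf, rfl⟩
  exact div_nonneg (finDir_nonneg hq0 hq1 c f) (finVar_nonneg hq0 hq1 f)

lemma gap_bddBelow (hq0 : 0 < q) (hq1 : q < 1) (c : ι → (ι → Bool) → Prop) :
    BddBelow { γ : ℝ | ∃ f : (ι → Bool) → ℝ, (∃ ω ω', f ω ≠ f ω') ∧
      γ = finDir q c f / finVar q f } :=
  ⟨0, fun γ hγ => gap_nonneg_mem hq0 hq1 c γ hγ⟩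

lemma gap_le (hq0 : 0 < q) (hq1 : q < 1) (c : ι → (ι → Bool) → Prop)
    {f : (ι → Bool) → ℝ} (hf : ∃ ω ω', f ω ≠ f ω') :
    finGap q c ≤ finDir q c f / finVar q f :=
  csInf_le (gap_bddBelow hq0 hq1 c) ⟨f, hf, rfl⟩

end

end TE

namespace TE

open Finset Function

noncomputable section

variable {ι : Type*} [Fintype ι] [DecidableEq ι] {q : ℝ}

def patch (S : Finset ι) (σ : {y // y ∈ S} → Bool) (ω : ι → Bool) : ι → Bool :=
  fun x => if h : x ∈ S then σ ⟨x, h⟩ else ω x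

lemma univ_congr {α : Type*} (i1 i2 : Fintype α) : (@Finset.univ α i1) = (@Finset.univ α i2) :=
  congrArg (fun i => @Finset.univ α i) (Subsingleton.elim i1 i2)

lemma patch_mem (S : Finset ι) (σ : {y // y ∈ S} → Bool) (ω : ι → Bool) {x : ι} (h : x ∈ S) :
    patch S σ ω x = σ ⟨x, h⟩ := dif_pos h

lemma patch_not_mem (S : Finset ι) (σ : {y // y ∈ S} → Bool) (ω : ι → Bool) {x : ι}
    (h : x ∉ S) : patch S σ ω x = ω x := dif_neg h

lemma patch_update_mem (S : Finset ι) (σ : {y // y ∈ S} → Bool) (ω : ι → Bool) {x : ι}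
    (h : x ∈ S) (b : Bool) :
    Function.update (patch S σ ω) x b = patch S (Function.update σ ⟨x, h⟩ b) ω := by
  funext y
  by_cases hy : y = x
  · subst hy
    rw [Function.update_self, patch_mem S _ ω h, Function.update_self]
  · rw [Function.update_of_ne hy]
    by_cases hyS : y ∈ S
    · rw [patch_mem S σ ω hyS, patch_mem S _ ω hyS,
        Function.update_of_ne (fun hc => hy (congrArg Subtype.val hc))]
    · rw [patch_not_mem S σ ω hyS, patch_not_mem S _ ω hyS]

lemma patch_update_not_mem (S : Finset ι) (σ : {y // y ∈ S} → Bool) (ω : ι → Bool) {x : ι}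
    (h : x ∉ S) (b : Bool) :
    Function.update (patch S σ ω) x b = patch S σ (Function.update ω x b) := by
  funext y
  by_cases hy : y = x
  · subst hy
    rw [Function.update_self, patch_not_mem S σ _ h, Function.update_self]
  · rw [Function.update_of_ne hy]
    by_cases hyS : y ∈ S
    · rw [patch_mem S σ ω hyS, patch_mem S σ _ hyS]
    · rw [patch_not_mem S σ ω hyS, patch_not_mem S σ _ hyS, Function.update_of_ne hy]

lemma patch_patch (S : Finset ι) (σ σ' : {y // y ∈ S} → Bool) (ω : ι → Bool) :
    patch S σ (patch S σ' ω) = patch S σ ω := by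
  funext y
  by_cases hy : y ∈ S
  · rw [patch_mem S σ _ hy, patch_mem S σ ω hy]
  · rw [patch_not_mem S σ _ hy, patch_not_mem S σ' ω hy, patch_not_mem S σ ω hy]

def avg (q : ℝ) (S : Finset ι) (f : (ι → Bool) → ℝ) (ω : ι → Bool) : ℝ :=
  ∑ σ : {y // y ∈ S} → Bool, wt q σ * f (patch S σ ω)

lemma avg_eq_finExp (S : Finset ι) (f : (ι → Bool) → ℝ) (ω : ι → Bool) :
    avg q S f ω = finExp q (fun σ : {y // y ∈ S} → Bool => f (patch S σ ω)) := rfl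

lemma avg_local (S : Finset ι) (f : (ι → Bool) → ℝ) {ω ω' : ι → Bool}
    (h : ∀ x, x ∉ S → ω x = ω' x) : avg q S f ω = avg q S f ω' := by
  unfold avg
  refine Finset.sum_congr rfl fun σ _ => ?_
  have : patch S σ ω = patch S σ ω' := by
    funext y
    by_cases hy : y ∈ S
    · rw [patch_mem S σ ω hy, patch_mem S σ ω' hy]
    · rw [patch_not_mem S σ ω hy, patch_not_mem S σ ω' hy, h y hy]
  rw [this]

lemma avg_update_mem (S : Finset ι) (f : (ι → Bool) → ℝ) (ω : ι → Bool) {x : ι} (h : x ∈ S)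
    (b : Bool) : avg q S f (Function.update ω x b) = avg q S f ω :=
  avg_local S f fun y hy => Function.update_of_ne (fun hc => hy (by rw [hc]; exact h)) _ _

lemma avg_patch (S : Finset ι) (f : (ι → Bool) → ℝ) (σ : {y // y ∈ S} → Bool) (ω : ι → Bool) :
    avg q S f (patch S σ ω) = avg q S f ω :=
  avg_local S f fun y hy => patch_not_mem S σ ω hy

lemma avg_mul (S : Finset ι) (G H : (ι → Bool) → ℝ)
    (hG : ∀ ω σ, G (patch S σ ω) = G ω) (ω : ι → Bool) :
    avg q S (fun ζ => G ζ * H ζ) ω = G ω * avg q S H ω := by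
  unfold avg
  rw [Finset.mul_sum]
  refine Finset.sum_congr rfl fun σ _ => ?_
  have h1 := hG ω σ
  dsimp only
  rw [h1]
  ring

def mixS (S : Finset ι) (σ : {y // y ∈ S} → Bool) (τ : {y // ¬ y ∈ S} → Bool) : ι → Bool :=
  (Equiv.piEquivPiSubtypeProd (· ∈ S) (fun _ => Bool)).symm (σ, τ)

lemma mixS_mem (S : Finset ι) (σ : {y // y ∈ S} → Bool) (τ : {y // ¬ y ∈ S} → Bool) {x : ι}
    (h : x ∈ S) : mixS S σ τ x = σ ⟨x, h⟩ := by
  simp [mixS, Equiv.piEquivPiSubtypeProd, h]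

lemma mixS_not_mem (S : Finset ι) (σ : {y // y ∈ S} → Bool) (τ : {y // ¬ y ∈ S} → Bool) {x : ι}
    (h : x ∉ S) : mixS S σ τ x = τ ⟨x, h⟩ := by
  simp [mixS, Equiv.piEquivPiSubtypeProd, h]

lemma wt_mixS (S : Finset ι) (σ : {y // y ∈ S} → Bool) (τ : {y // ¬ y ∈ S} → Bool) :
    wt q (mixS S σ τ) = wt q σ * wt q τ := by
  unfold wt
  rw [← Fintype.prod_subtype_mul_prod_subtype (· ∈ S)
    (fun x => if mixS S σ τ x then 1 - q else q)]
  congr 1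
  · exact Finset.prod_congr (univ_congr _ _) fun y _ => by rw [mixS_mem S σ τ y.2]
  · exact Finset.prod_congr (univ_congr _ _) fun y _ => by rw [mixS_not_mem S σ τ y.2]

lemma patch_mixS (S : Finset ι) (σ σ' : {y // y ∈ S} → Bool) (τ : {y // ¬ y ∈ S} → Bool) :
    patch S σ (mixS S σ' τ) = mixS S σ τ := by
  funext y
  by_cases hy : y ∈ S
  · rw [patch_mem S σ _ hy, mixS_mem S σ τ hy]
  · rw [patch_not_mem S σ _ hy, mixS_not_mem S σ' τ hy, mixS_not_mem S σ τ hy]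

lemma core (S : Finset ι) (F : (ι → Bool) → ℝ) :
    finExp q F = ∑ σ : {y // y ∈ S} → Bool, ∑ τ : {y // ¬ y ∈ S} → Bool,
      wt q σ * wt q τ * F (mixS S σ τ) := by
  rw [finExp_def]
  rw [← Equiv.sum_comp (Equiv.piEquivPiSubtypeProd (· ∈ S) (fun _ => Bool)).symm
    (fun ω => wt q ω * F ω)]
  rw [Fintype.sum_prod_type]
  exact Finset.sum_congr rfl fun σ _ => Finset.sum_congr rfl fun τ _ => by
    show wt q (mixS S σ τ) * F (mixS S σ τ) = _
    rw [wt_mixS]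

lemma tower (S : Finset ι) (f : (ι → Bool) → ℝ) :
    finExp q (fun ω => avg q S f ω) = finExp q f := by
  rw [core S (fun ω => avg q S f ω), core S f]
  have h1 : ∀ (σ' : {y // y ∈ S} → Bool) (τ : {y // ¬ y ∈ S} → Bool),
      avg q S f (mixS S σ' τ) = ∑ σ : {y // y ∈ S} → Bool, wt q σ * f (mixS S σ τ) := by
    intro σ' τ
    unfold avg
    exact Finset.sum_congr rfl fun σ _ => by rw [patch_mixS]
  calc ∑ σ' : {y // y ∈ S} → Bool, ∑ τ : {y // ¬ y ∈ S} → Bool,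
        wt q σ' * wt q τ * avg q S f (mixS S σ' τ)
      = ∑ σ' : {y // y ∈ S} → Bool, wt q σ' * ∑ τ : {y // ¬ y ∈ S} → Bool,
          wt q τ * ∑ σ : {y // y ∈ S} → Bool, wt q σ * f (mixS S σ τ) := by
        refine Finset.sum_congr rfl fun σ' _ => ?_
        rw [Finset.mul_sum]
        exact Finset.sum_congr rfl fun τ _ => by rw [h1 σ' τ]; ring
    _ = ∑ τ : {y // ¬ y ∈ S} → Bool,
          wt q τ * ∑ σ : {y // y ∈ S} → Bool, wt q σ * f (mixS S σ τ) := by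
        rw [← Finset.sum_mul, sum_wt, one_mul]
    _ = ∑ σ : {y // y ∈ S} → Bool, ∑ τ : {y // ¬ y ∈ S} → Bool,
          wt q σ * wt q τ * f (mixS S σ τ) := by
        rw [Finset.sum_comm]
        refine Finset.sum_congr rfl fun τ _ => ?_
        rw [Finset.mul_sum]
        exact Finset.sum_congr rfl fun σ _ => by ring

lemma rest (S : Finset ι) (h : (ι → Bool) → ℝ)
    (hloc : ∀ ω ω', (∀ x ∈ S, ω x = ω' x) → h ω = h ω') (ω₀ : ι → Bool) :
    finExp q h = finExp q (fun σ : {y // y ∈ S} → Bool => h (patch S σ ω₀)) := by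
  rw [core S h, finExp_def]
  refine Finset.sum_congr rfl fun σ _ => ?_
  have h2 : ∀ τ : {y // ¬ y ∈ S} → Bool, h (mixS S σ τ) = h (patch S σ ω₀) := by
    intro τ
    refine hloc _ _ fun x hx => ?_
    rw [mixS_mem S σ τ hx, patch_mem S σ ω₀ hx]
  calc ∑ τ : {y // ¬ y ∈ S} → Bool, wt q σ * wt q τ * h (mixS S σ τ)
      = ∑ τ : {y // ¬ y ∈ S} → Bool, wt q τ * (wt q σ * h (patch S σ ω₀)) := by
        exact Finset.sum_congr rfl fun τ _ => by rw [h2 τ]; ring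
    _ = wt q σ * h (patch S σ ω₀) := by rw [← Finset.sum_mul, sum_wt, one_mul]

lemma rest_avg (S : Finset ι) (h : (ι → Bool) → ℝ)
    (hloc : ∀ ω ω', (∀ x ∈ S, ω x = ω' x) → h ω = h ω') (ω₀ : ι → Bool) :
    finExp q h = avg q S h ω₀ := by
  rw [avg_eq_finExp]
  exact rest S h hloc ω₀

lemma subavg (T S : Finset ι) (hTS : T ⊆ S) (f : (ι → Bool) → ℝ)
    (h0 : ∀ ω, avg q T f ω = 0) (ω : ι → Bool) : avg q S f ω = 0 := by
  classical
  set ι' := {y // y ∈ S}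
  set S' : Finset ι' := Finset.univ.filter (fun z => z.1 ∈ T) with hS'
  have hmemS' : ∀ z : ι', z ∈ S' ↔ z.1 ∈ T := by
    intro z; simp [hS']
  -- the equivalence between T-subtype and the subtype of S'
  set e : {y // y ∈ T} ≃ {z : ι' // z ∈ S'} :=
    { toFun := fun t => ⟨⟨t.1, hTS t.2⟩, (hmemS' _).2 t.2⟩
      invFun := fun z => ⟨z.1.1, (hmemS' _).1 z.2⟩
      left_inv := fun t => rfl
      right_inv := fun z => rfl } with he
  have hG : avg q S f ω = finExp q (fun σ : ι' → Bool => f (patch S σ ω)) := rfl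
  rw [hG, core S' (fun σ : ι' → Bool => f (patch S σ ω))]
  rw [Finset.sum_comm]
  refine Finset.sum_eq_zero fun β _ => ?_
  set ζ : ι → Bool := patch S (mixS S' (fun _ => true) β) ω with hζ
  have key : ∀ α : {z : ι' // z ∈ S'} → Bool,
      f (patch S (mixS S' α β) ω) = f (patch T (fun t => α (e t)) ζ) := by
    intro α
    congr 1
    funext x
    by_cases hxT : x ∈ T
    · have hxS : x ∈ S := hTS hxT
      rw [patch_mem S _ ω hxS, patch_mem T _ ζ hxT,
        mixS_mem S' α β ((hmemS' ⟨x, hxS⟩).2 hxT)]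
      rw [he]
      rfl
    · by_cases hxS : x ∈ S
      · have hz : (⟨x, hxS⟩ : ι') ∉ S' := fun hc => hxT ((hmemS' _).1 hc)
        rw [patch_mem S _ ω hxS, patch_not_mem T _ ζ hxT, hζ]
        rw [mixS_not_mem S' α β hz]
        rw [patch_mem S _ ω hxS, mixS_not_mem S' _ β hz]
      · rw [patch_not_mem S _ ω hxS, patch_not_mem T _ ζ hxT, hζ,
          patch_not_mem S _ ω hxS]
  have hsum : ∀ α : {z : ι' // z ∈ S'} → Bool,
      wt q α * f (patch S (mixS S' α β) ω) = wt q α * f (patch T (fun t => α (e t)) ζ) :=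
    fun α => by rw [key α]
  calc ∑ α : {z : ι' // z ∈ S'} → Bool, wt q α * wt q β * f (patch S (mixS S' α β) ω)
      = wt q β * ∑ α : {z : ι' // z ∈ S'} → Bool, wt q α * f (patch T (fun t => α (e t)) ζ) := by
        rw [Finset.mul_sum]
        exact Finset.sum_congr rfl fun α _ => by rw [key α]; ring
    _ = wt q β * ∑ α' : {y // y ∈ T} → Bool, wt q α' * f (patch T α' ζ) := by
        congr 1
        refine (Fintype.sum_equiv (Equiv.arrowCongr e (Equiv.refl Bool)) _ _ ?_).symm
        intro α'
        have h2 : (fun t => ((Equiv.arrowCongr e (Equiv.refl Bool)) α') (e t)) = α' := by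
          funext t
          simp only [Equiv.arrowCongr_apply, Function.comp_apply, Equiv.refl_apply,
            Equiv.symm_apply_apply]
        have h1 : wt q ((Equiv.arrowCongr e (Equiv.refl Bool)) α') = wt q α' := by
          unfold wt
          rw [← Fintype.prod_equiv e
            (fun t => if ((Equiv.arrowCongr e (Equiv.refl Bool)) α') (e t) then 1 - q else q)
            (fun z => if ((Equiv.arrowCongr e (Equiv.refl Bool)) α') z then 1 - q else q)
            (fun t => rfl)]
          refine Finset.prod_congr (univ_congr _ _) fun t _ => ?_
          have h3 := congrFun h2 t
          rw [h3]
        rw [h1, h2]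
    _ = wt q β * avg q T f ζ := rfl
    _ = 0 := by rw [h0 ζ, mul_zero]

end

end TE

namespace TE

open Finset Function

noncomputable section

variable {V : Type*} [Fintype V] [DecidableEq V] {q : ℝ}

lemma ind_congr {P Q : Prop} (h : P ↔ Q) : ind P = ind Q := by
  unfold ind
  by_cases hP : P
  · rw [if_pos hP, if_pos (h.1 hP)]
  · rw [if_neg hP, if_neg (fun hq => hP (h.2 hq))]

lemma ind_nonneg (P : Prop) : 0 ≤ ind P := by
  unfold ind; split <;> norm_num

lemma varAt_nonneg (hq0 : 0 < q) (hq1 : q < 1) (f : (V → Bool) → ℝ) (x : V) (ω : V → Bool) :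
    0 ≤ varAt q f x ω := by
  unfold varAt
  have h1 : (0:ℝ) ≤ 1 - q := by linarith
  positivity

/-- The East constraint on the full space. -/
def cF (parent : V → V) (r : V) : V → (V → Bool) → Prop :=
  fun x ω => x = r ∨ ω (parent x) = false

section Tree

variable (parent : V → V) (r : V)

lemma parent_ne_self (hreach : ∀ x, ∃ n : ℕ, parent^[n] x = r) {x : V} (hx : x ≠ r) :
    parent x ≠ x := by
  intro hpx
  obtain ⟨n, hn⟩ := hreach x
  rw [Function.iterate_fixed hpx n] at hn
  exact hx hn

lemma HCfull (hreach : ∀ x, ∃ n : ℕ, parent^[n] x = r) :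
    ∀ (x : V) (ω : V → Bool) (b : Bool),
      cF parent r x (Function.update ω x b) ↔ cF parent r x ω := by
  intro x ω b
  by_cases hx : x = r
  · simp [cF, hx]
  · unfold cF
    rw [Function.update_of_ne (parent_ne_self parent r hreach hx)]

lemma ergodic (hreach : ∀ x, ∃ n : ℕ, parent^[n] x = r) (f : (V → Bool) → ℝ)
    (hD : ∀ x ω, cF parent r x ω →
      f (Function.update ω x true) = f (Function.update ω x false)) :
    ∀ ω ω', f ω = f ω' := by
  have base : ∀ (x : V) (ω : V → Bool), (cF parent r x ω) → ∀ b, f (Function.update ω x b) = f ω := by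
    intro x ω hc b
    have h := hD x ω hc
    have hboth : ∀ b' : Bool, f (Function.update ω x b') = f (Function.update ω x true) := by
      intro b'
      cases b'
      · exact h.symm
      · rfl
    have hself : f ω = f (Function.update ω x (ω x)) := by rw [Function.update_eq_self]
    rw [hself, hboth b, hboth (ω x)]
  have hcx : ∀ x ω, cF parent r x ω ↔ cF parent r x ω := fun _ _ => Iff.rfl
  have main : ∀ (n : ℕ) (x : V), parent^[n] x = r → ∀ ω b, f (Function.update ω x b) = f ω := by
    intro n
    induction n with
    | zero =>
      intro x hx ω b
      exact base x ω (Or.inl hx) b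
    | succ n ih =>
      intro x hx ω b
      by_cases hxr : x = r
      · exact base x ω (Or.inl hxr) b
      · have hy : parent^[n] (parent x) = r := by
          rw [← Function.iterate_succ_apply]
          exact hx
        have ihy := ih (parent x) hy
        have hxy : parent x ≠ x := parent_ne_self parent r hreach hxr
        have hcomm : ∀ b' : Bool, Function.update (Function.update ω (parent x) false) x b'
            = Function.update (Function.update ω x b') (parent x) false := fun b' =>
          Function.update_comm hxy false b' ω
        have hstep : ∀ b' : Bool,
            f (Function.update (Function.update ω (parent x) false) x b')
              = f (Function.update ω (parent x) false) := by
          intro b'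
          refine base x (Function.update ω (parent x) false) (Or.inr ?_) b'
          rw [Function.update_self]
        have hAB : ∀ b' : Bool, f (Function.update ω x b')
            = f (Function.update (Function.update ω (parent x) false) x b') := by
          intro b'
          rw [hcomm b']
          exact (ihy (Function.update ω x b') false).symm
        have hself : f ω = f (Function.update ω x (ω x)) := by rw [Function.update_eq_self]
        rw [hAB b, hstep b, hself, hAB (ω x), hstep (ω x)]
  have flip : ∀ (x : V) (ω : V → Bool) (b : Bool), f (Function.update ω x b) = f ω := by
    intro x ω b
    obtain ⟨n, hn⟩ := hreach x
    exact main n x hn ω b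
  have hs : ∀ s : Finset V, ∀ ω ω' : V → Bool, (∀ x, x ∉ s → ω x = ω' x) → f ω = f ω' := by
    intro s
    induction s using Finset.induction_on with
    | empty =>
      intro ω ω' h
      have : ω = ω' := funext fun x => h x (Finset.notMem_empty x)
      rw [this]
    | insert z s' hx ih =>
      intro ω ω' h
      have h1 : f ω = f (Function.update ω z (ω' z)) := (flip z ω (ω' z)).symm
      rw [h1]
      refine ih (Function.update ω z (ω' z)) ω' fun x hxs => ?_
      by_cases hxz : x = z
      · subst hxz; rw [Function.update_self]
      · rw [Function.update_of_ne hxz]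
        exact h x (by simp [hxz, hxs])
  intro ω ω'
  exact hs Finset.univ ω ω' (fun x hx => absurd (Finset.mem_univ x) hx)

end Tree

section Model

variable (parent : V → V) (r v a : V)

def gam : Finset V := Finset.univ.filter (fun y => ∃ k : ℕ, parent^[k] v = y)
def tA : Finset V := Finset.univ.filter (fun y => ∃ k : ℕ, parent^[k] y = a)
def asetD : Finset V := gam parent v ∪ tA parent a
def bsetD : Finset V := Finset.univ \ tA parent a

lemma mem_gam {y : V} : y ∈ gam parent v ↔ ∃ k : ℕ, parent^[k] v = y := by
  simp [gam]

lemma mem_tA {y : V} : y ∈ tA parent a ↔ ∃ k : ℕ, parent^[k] y = a := by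
  simp [tA]

lemma mem_bsetD {y : V} : y ∈ bsetD parent a ↔ y ∉ tA parent a := by
  simp [bsetD]

variable (hroot : parent r = r) (hreach : ∀ x, ∃ n : ℕ, parent^[n] x = r)
  (hchild : parent a = v) (hav : a ≠ v)

include hroot hchild hav in
lemma r_not_tA : r ∉ tA parent a := by
  rw [mem_tA]
  rintro ⟨k, hk⟩
  rw [Function.iterate_fixed hroot k] at hk
  apply hav
  rw [← hk] at hchild ⊢
  rw [hroot] at hchild
  exact hchild

include hreach in
lemma r_mem_aset : r ∈ asetD parent v a := by
  rw [asetD, Finset.mem_union, mem_gam]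
  exact Or.inl (hreach v)

include hchild in
lemma par_aset : ∀ x ∈ asetD parent v a, parent x ∈ asetD parent v a := by
  intro x hx
  rw [asetD, Finset.mem_union] at hx ⊢
  rcases hx with hx | hx
  · rw [mem_gam] at hx ⊢
    obtain ⟨k, hk⟩ := hx
    exact Or.inl ⟨k + 1, by rw [Function.iterate_succ_apply', hk]⟩
  · rw [mem_tA] at hx
    obtain ⟨k, hk⟩ := hx
    cases k with
    | zero =>
      simp only [Function.iterate_zero, id] at hk
      subst hk
      rw [hchild]
      exact Or.inl (by rw [mem_gam]; exact ⟨0, rfl⟩)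
    | succ k =>
      right
      rw [mem_tA]
      exact ⟨k, by rw [← Function.iterate_succ_apply]; exact hk⟩

lemma par_bset : ∀ x ∈ bsetD parent a, parent x ∈ bsetD parent a := by
  intro x hx
  rw [mem_bsetD] at hx ⊢
  intro hp
  apply hx
  rw [mem_tA] at hp ⊢
  obtain ⟨k, hk⟩ := hp
  exact ⟨k + 1, by rw [Function.iterate_succ_apply]; exact hk⟩

lemma tA_sub_aset : tA parent a ⊆ asetD parent v a := Finset.subset_union_right

end Model

end

end TE

namespace TE

open Finset Function

noncomputable section

variable {V : Type*} [Fintype V] [DecidableEq V] {q : ℝ}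

variable (parent : V → V) (r : V)

lemma cF_iff_tree (S : Finset V) (hpar : ∀ x ∈ S, parent x ∈ S) {x : V} (hx : x ∈ S)
    (σ : {y // y ∈ S} → Bool) (ω : V → Bool) :
    treeEastC parent r S ⟨x, hx⟩ σ ↔ cF parent r x (patch S σ ω) := by
  unfold treeEastC cF
  refine or_congr Iff.rfl ?_
  have hp : parent x ∈ S := hpar x hx
  rw [patch_mem S σ ω hp]
  constructor
  · rintro ⟨h, hσ⟩; exact hσ
  · intro h; exact ⟨hp, h⟩

lemma hat_pointwise (S : Finset V) (hpar : ∀ x ∈ S, parent x ∈ S) {x : V} (hx : x ∈ S)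
    (f : (V → Bool) → ℝ) (ω : V → Bool) (σ : {y // y ∈ S} → Bool) :
    ind (treeEastC parent r S ⟨x, hx⟩ σ) * varAt q (fun σ' => f (patch S σ' ω)) ⟨x, hx⟩ σ
      = ind (cF parent r x (patch S σ ω)) * varAt q f x (patch S σ ω) := by
  congr 1
  · exact ind_congr (cF_iff_tree parent r S hpar hx σ ω)
  · unfold varAt
    have h1 : ∀ b : Bool, (fun σ' => f (patch S σ' ω)) (Function.update σ ⟨x, hx⟩ b)
        = f (Function.update (patch S σ ω) x b) := by
      intro b
      dsimp only
      rw [patch_update_mem S σ ω hx]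
    rw [h1 true, h1 false]

lemma dir_hat (S : Finset V) (hpar : ∀ x ∈ S, parent x ∈ S) (f : (V → Bool) → ℝ)
    (ω : V → Bool) :
    finDir q (treeEastC parent r S) (fun σ => f (patch S σ ω))
      = ∑ x ∈ S, avg q S (fun ζ => ind (cF parent r x ζ) * varAt q f x ζ) ω := by
  unfold finDir
  rw [← Finset.sum_coe_sort S (fun x => avg q S (fun ζ => ind (cF parent r x ζ) * varAt q f x ζ) ω)]
  refine Finset.sum_congr (univ_congr _ _) fun xh _ => ?_
  rw [avg_eq_finExp]
  refine finExp_congr fun σ => ?_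
  exact hat_pointwise parent r S hpar xh.2 f ω σ

lemma local_ind_varAt (S : Finset V) (hpar : ∀ x ∈ S, parent x ∈ S) {x : V} (hx : x ∈ S)
    (g : (V → Bool) → ℝ) (hloc : ∀ ω ω', (∀ y ∈ S, ω y = ω' y) → g ω = g ω') :
    ∀ ω ω', (∀ y ∈ S, ω y = ω' y) →
      ind (cF parent r x ω) * varAt q g x ω = ind (cF parent r x ω') * varAt q g x ω' := by
  intro ω ω' hagree
  have hupag : ∀ b : Bool, ∀ y ∈ S, Function.update ω x b y = Function.update ω' x b y := by
    intro b y hy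
    by_cases hyx : y = x
    · subst hyx; rw [Function.update_self, Function.update_self]
    · rw [Function.update_of_ne hyx, Function.update_of_ne hyx]
      exact hagree y hy
  congr 1
  · refine ind_congr ?_
    unfold cF
    rw [hagree (parent x) (hpar x hx)]
  · unfold varAt
    rw [hloc _ _ (hupag true), hloc _ _ (hupag false)]

lemma conv_dir (S : Finset V) (hpar : ∀ x ∈ S, parent x ∈ S) (g : (V → Bool) → ℝ)
    (hloc : ∀ ω ω', (∀ y ∈ S, ω y = ω' y) → g ω = g ω') (ω₀ : V → Bool) :
    finDir q (treeEastC parent r S) (fun σ => g (patch S σ ω₀))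
      = ∑ x ∈ S, finExp q (fun ω => ind (cF parent r x ω) * varAt q g x ω) := by
  rw [dir_hat parent r S hpar g ω₀]
  refine Finset.sum_congr rfl fun x hx => ?_
  exact (rest_avg S _ (local_ind_varAt parent r S hpar hx g hloc) ω₀).symm

lemma conv_exp (S : Finset V) (g : (V → Bool) → ℝ)
    (hloc : ∀ ω ω', (∀ y ∈ S, ω y = ω' y) → g ω = g ω') (ω₀ : V → Bool) :
    finExp q (fun σ : {y // y ∈ S} → Bool => g (patch S σ ω₀)) = finExp q g :=
  (rest S g hloc ω₀).symm

lemma conv_var (S : Finset V) (g : (V → Bool) → ℝ)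
    (hloc : ∀ ω ω', (∀ y ∈ S, ω y = ω' y) → g ω = g ω') (ω₀ : V → Bool) :
    finVar q (fun σ : {y // y ∈ S} → Bool => g (patch S σ ω₀)) = finVar q g := by
  unfold finVar
  rw [conv_exp S g hloc ω₀]
  congr 1
  have h2 : ∀ ω ω', (∀ y ∈ S, ω y = ω' y) → g ω ^ 2 = g ω' ^ 2 := fun ω ω' h => by
    rw [hloc ω ω' h]
  exact conv_exp S (fun ω => g ω ^ 2) h2 ω₀

lemma conv_nonconst (S : Finset V) (g : (V → Bool) → ℝ)
    (hloc : ∀ ω ω', (∀ y ∈ S, ω y = ω' y) → g ω = g ω') (ω₀ : V → Bool)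
    (hg : ∃ ω ω', g ω ≠ g ω') :
    ∃ σ σ' : {y // y ∈ S} → Bool, g (patch S σ ω₀) ≠ g (patch S σ' ω₀) := by
  obtain ⟨ω, ω', hne⟩ := hg
  refine ⟨fun y => ω y.1, fun y => ω' y.1, ?_⟩
  have h1 : g (patch S (fun y => ω y.1) ω₀) = g ω :=
    hloc _ _ fun y hy => patch_mem S _ ω₀ hy
  have h2 : g (patch S (fun y => ω' y.1) ω₀) = g ω' :=
    hloc _ _ fun y hy => patch_mem S _ ω₀ hy
  rw [h1, h2]
  exact hne

end

end TE

namespace TE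

open Finset Function

noncomputable section

variable {V : Type*} [Fintype V] [DecidableEq V] {q : ℝ}

variable (parent : V → V) (r v a : V)

lemma prop_B (hq0 : 0 < q) (hq1 : q < 1)
    (hreach : ∀ x, ∃ n : ℕ, parent^[n] x = r)
    (f : (V → Bool) → ℝ) (lam : ℝ)
    (hE : ∀ ω, Lneg q (cF parent r) f ω = lam * f ω)
    (hmu : finExp q f = 0) :
    ∑ x ∈ bsetD parent a, finExp q (fun ω => ind (cF parent r x ω)
        * varAt q (avg q (tA parent a) f) x ω)
      = lam * finVar q (avg q (tA parent a) f) := by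
  set Ta := tA parent a with hTa
  set g : (V → Bool) → ℝ := avg q Ta f with hgdef
  -- Step 1: per-site identity on B
  have step1 : ∀ x ∈ bsetD parent a,
      finExp q (fun ω => ind (cF parent r x ω) * varAt q g x ω)
        = finExp q (fun ω => g ω * (ind (cF parent r x ω) * oneStep q x f ω)) := by
    intro x hxB
    have hxTa : x ∉ Ta := (mem_bsetD parent a).1 hxB
    have hpTa : parent x ∉ Ta := (mem_bsetD parent a).1 (par_bset parent a x hxB)
    have hd := dirx (q := q) x (cF parent r x) (fun ω b => HCfull parent r hreach x ω b) g
    rw [hd]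
    have ID1 : ∀ ω, ind (cF parent r x ω) * oneStep q x g ω
        = avg q Ta (fun ζ => ind (cF parent r x ζ) * oneStep q x f ζ) ω := by
      intro ω
      have hptc : ∀ σ : {y // y ∈ Ta} → Bool,
          cF parent r x (patch Ta σ ω) = cF parent r x ω := by
        intro σ
        unfold cF
        rw [patch_not_mem Ta σ ω hpTa]
      have hupd : ∀ (σ : {y // y ∈ Ta} → Bool) (b : Bool),
          Function.update (patch Ta σ ω) x b = patch Ta σ (Function.update ω x b) :=
        fun σ b => patch_update_not_mem Ta σ ω hxTa b
      unfold avg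
      have expand : ∀ σ : {y // y ∈ Ta} → Bool,
          wt q σ * ((fun ζ => ind (cF parent r x ζ) * oneStep q x f ζ) (patch Ta σ ω))
            = ind (cF parent r x ω) * (wt q σ * f (patch Ta σ ω))
              - ind (cF parent r x ω) * ((1 - q) * (wt q σ * f (patch Ta σ (Function.update ω x true))))
              - ind (cF parent r x ω) * (q * (wt q σ * f (patch Ta σ (Function.update ω x false)))) := by
        intro σ
        dsimp only
        rw [hptc σ]
        unfold oneStep
        rw [hupd σ true, hupd σ false]
        ring
      rw [Finset.sum_congr rfl (fun σ _ => expand σ)]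
      rw [Finset.sum_sub_distrib, Finset.sum_sub_distrib]
      rw [← Finset.mul_sum, ← Finset.mul_sum, ← Finset.mul_sum]
      rw [← Finset.mul_sum, ← Finset.mul_sum]
      unfold oneStep
      show ind (cF parent r x ω) * (avg q Ta f ω
          - ((1 - q) * avg q Ta f (Function.update ω x true)
            + q * avg q Ta f (Function.update ω x false)))
        = _
      unfold avg
      ring
    calc finExp q (fun ω => ind (cF parent r x ω) * (g ω * oneStep q x g ω))
        = finExp q (fun ω => g ω
            * avg q Ta (fun ζ => ind (cF parent r x ζ) * oneStep q x f ζ) ω) := by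
          refine finExp_congr fun ω => ?_
          rw [← ID1 ω]
          ring
      _ = finExp q (fun ω =>
            avg q Ta (fun ζ => g ζ * (ind (cF parent r x ζ) * oneStep q x f ζ)) ω) := by
          refine finExp_congr fun ω => ?_
          rw [avg_mul Ta g (fun ζ => ind (cF parent r x ζ) * oneStep q x f ζ)
            (fun ω' σ => by rw [hgdef]; exact avg_patch Ta f σ ω') ω]
      _ = finExp q (fun ζ => g ζ * (ind (cF parent r x ζ) * oneStep q x f ζ)) :=
          tower Ta _
  rw [Finset.sum_congr rfl step1]
  -- Step 2: extend the sum to all of `univ`, the `Ta`-terms vanish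
  have hTaZero : ∀ x ∈ Ta,
      finExp q (fun ω => g ω * (ind (cF parent r x ω) * oneStep q x f ω)) = 0 := by
    intro x hxTa
    have h1 : finExp q (fun ω => g ω * (ind (cF parent r x ω) * oneStep q x f ω))
        = finExp q (fun ω => (g ω * ind (cF parent r x ω)) * oneStep q x f ω) :=
      finExp_congr fun ω => by ring
    rw [h1]
    refine ortho x _ f fun ω b => ?_
    have h2 : g (Function.update ω x b) = g ω := by
      rw [hgdef]; exact avg_update_mem Ta f ω hxTa b
    have h3 : ind (cF parent r x (Function.update ω x b)) = ind (cF parent r x ω) :=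
      ind_congr (HCfull parent r hreach x ω b)
    rw [h2, h3]
  have hsplit := Finset.sum_sdiff (f := fun x =>
    finExp q (fun ω => g ω * (ind (cF parent r x ω) * oneStep q x f ω)))
    (Finset.subset_univ Ta)
  have hTaSum : ∑ x ∈ Ta,
      finExp q (fun ω => g ω * (ind (cF parent r x ω) * oneStep q x f ω)) = 0 :=
    Finset.sum_eq_zero hTaZero
  have hBsum : ∑ x ∈ bsetD parent a,
      finExp q (fun ω => g ω * (ind (cF parent r x ω) * oneStep q x f ω))
      = ∑ x : V, finExp q (fun ω => g ω * (ind (cF parent r x ω) * oneStep q x f ω)) := by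
    rw [← hsplit, hTaSum, add_zero]
    rfl
  rw [hBsum]
  -- Step 3: identify with `g · Lneg f` and conclude
  rw [← finExp_sumFin Finset.univ
    (fun x ω => g ω * (ind (cF parent r x ω) * oneStep q x f ω))]
  have h4 : finExp q (fun ω => ∑ x : V, g ω * (ind (cF parent r x ω) * oneStep q x f ω))
      = finExp q (fun ω => g ω * Lneg q (cF parent r) f ω) := by
    refine finExp_congr fun ω => ?_
    unfold Lneg
    rw [Finset.mul_sum]
  rw [h4]
  have h5 : finExp q (fun ω => g ω * Lneg q (cF parent r) f ω)
      = lam * finExp q (fun ω => g ω * f ω) := by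
    rw [← finExp_smul]
    refine finExp_congr fun ω => ?_
    rw [hE ω]
    ring
  rw [h5]
  congr 1
  have h6 : finExp q (fun ω => g ω * f ω)
      = finExp q (fun ω => avg q Ta (fun ζ => g ζ * f ζ) ω) := (tower Ta _).symm
  have h7 : finExp q (fun ω => avg q Ta (fun ζ => g ζ * f ζ) ω)
      = finExp q (fun ω => g ω * g ω) := by
    refine finExp_congr fun ω => ?_
    rw [avg_mul Ta g f (fun ω' σ => by rw [hgdef]; exact avg_patch Ta f σ ω') ω]
  have h8 : finExp q g = 0 := by
    have := tower (q := q) Ta f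
    rw [hgdef]
    show finExp q (fun ω => avg q Ta f ω) = 0
    rw [this, hmu]
  rw [h6, h7]
  unfold finVar
  rw [h8]
  have h9 : finExp q (fun ω => g ω ^ 2) = finExp q (fun ω => g ω * g ω) :=
    finExp_congr fun ω => sq (g ω)
  rw [h9]
  ring

end

end TE

namespace TE

open Finset Function

noncomputable section

variable {V : Type*} [Fintype V] [DecidableEq V] {q : ℝ}

variable (parent : V → V) (r v a : V)

lemma prop_A (hq0 : 0 < q) (hq1 : q < 1)
    (hreach : ∀ x, ∃ n : ℕ, parent^[n] x = r)
    (hchild : parent a = v)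
    (f : (V → Bool) → ℝ) (lam : ℝ)
    (hE : ∀ ω, Lneg q (cF parent r) f ω = lam * f ω)
    (h0 : ∀ ω, avg q (tA parent a) f ω = 0)
    (hfnc : ∃ ω ω', f ω ≠ f ω') :
    finGap q (treeEastC parent r (asetD parent v a)) ≤ lam := by
  set A := asetD parent v a with hA
  set gA := finGap q (treeEastC parent r A) with hgA
  have hparA := par_aset parent v a hchild
  have hA0 : ∀ ω, avg q A f ω = 0 := fun ω =>
    subavg (tA parent a) A (tA_sub_aset parent v a) f h0 ω
  -- the restricted function for a given exterior configuration
  have hvar : ∀ ω, finVar q (fun σ : {y // y ∈ A} → Bool => f (patch A σ ω))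
      = avg q A (fun ζ => f ζ ^ 2) ω := by
    intro ω
    unfold finVar
    have hE0 : finExp q (fun σ : {y // y ∈ A} → Bool => f (patch A σ ω)) = 0 := by
      rw [← avg_eq_finExp]
      exact hA0 ω
    rw [hE0, avg_eq_finExp]
    norm_num
  have hPer : ∀ ω, gA * finVar q (fun σ : {y // y ∈ A} → Bool => f (patch A σ ω))
      ≤ finDir q (treeEastC parent r A) (fun σ => f (patch A σ ω)) := by
    intro ω
    by_cases hnc : ∃ σ σ' : {y // y ∈ A} → Bool, f (patch A σ ω) ≠ f (patch A σ' ω)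
    · have h1 := gap_le hq0 hq1 (treeEastC parent r A) hnc
      have h2 : 0 < finVar q (fun σ : {y // y ∈ A} → Bool => f (patch A σ ω)) :=
        finVar_pos hq0 hq1 hnc
      calc gA * finVar q (fun σ : {y // y ∈ A} → Bool => f (patch A σ ω))
          ≤ (finDir q (treeEastC parent r A) (fun σ => f (patch A σ ω))
              / finVar q (fun σ : {y // y ∈ A} → Bool => f (patch A σ ω)))
            * finVar q (fun σ : {y // y ∈ A} → Bool => f (patch A σ ω)) :=
            mul_le_mul_of_nonneg_right h1 h2.le
        _ = finDir q (treeEastC parent r A) (fun σ => f (patch A σ ω)) :=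
            div_mul_cancel₀ _ h2.ne'
    · push_neg at hnc
      rw [finVar_of_const hnc, mul_zero]
      exact finDir_nonneg hq0 hq1 _ _
  have hInt := finExp_mono hq0 hq1 hPer
  -- compute the left side
  have hL : finExp q (fun ω => gA * finVar q (fun σ : {y // y ∈ A} → Bool => f (patch A σ ω)))
      = gA * finExp q (fun ζ => f ζ ^ 2) := by
    have h1 : finExp q (fun ω => gA * finVar q (fun σ : {y // y ∈ A} → Bool => f (patch A σ ω)))
        = finExp q (fun ω => gA * avg q A (fun ζ => f ζ ^ 2) ω) :=
      finExp_congr fun ω => by rw [hvar ω]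
    rw [h1, finExp_smul, tower]
  -- compute the right side
  have hR : finExp q (fun ω => finDir q (treeEastC parent r A) (fun σ => f (patch A σ ω)))
      ≤ lam * finExp q (fun ζ => f ζ * f ζ) := by
    have h1 : finExp q (fun ω => finDir q (treeEastC parent r A) (fun σ => f (patch A σ ω)))
        = ∑ x ∈ A, finExp q (fun ω =>
            avg q A (fun ζ => ind (cF parent r x ζ) * varAt q f x ζ) ω) := by
      rw [finExp_congr (fun ω => dir_hat parent r A hparA f ω)]
      exact finExp_sumFin A _
    have h2 : ∀ x ∈ A, finExp q (fun ω =>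
        avg q A (fun ζ => ind (cF parent r x ζ) * varAt q f x ζ) ω)
        = finExp q (fun ζ => ind (cF parent r x ζ) * varAt q f x ζ) :=
      fun x _ => tower A _
    rw [h1, Finset.sum_congr rfl h2]
    have h3 : ∑ x ∈ A, finExp q (fun ζ => ind (cF parent r x ζ) * varAt q f x ζ)
        ≤ ∑ x ∈ Finset.univ, finExp q (fun ζ => ind (cF parent r x ζ) * varAt q f x ζ) := by
      refine Finset.sum_le_sum_of_subset_of_nonneg (Finset.subset_univ A) fun x _ _ => ?_
      exact finExp_nonneg hq0 hq1 fun ζ =>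
        mul_nonneg (ind_nonneg _) (varAt_nonneg hq0 hq1 f x ζ)
    have h4 : ∑ x ∈ Finset.univ, finExp q (fun ζ => ind (cF parent r x ζ) * varAt q f x ζ)
        = finDir q (cF parent r) f := rfl
    have h5 : finDir q (cF parent r) f = lam * finExp q (fun ζ => f ζ * f ζ) := by
      rw [dir_eq (cF parent r) (fun x ω b => HCfull parent r hreach x ω b) f]
      rw [← finExp_smul]
      refine finExp_congr fun ω => ?_
      rw [hE ω]
      ring
    calc ∑ x ∈ A, finExp q (fun ζ => ind (cF parent r x ζ) * varAt q f x ζ)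
        ≤ ∑ x ∈ Finset.univ, finExp q (fun ζ => ind (cF parent r x ζ) * varAt q f x ζ) := h3
      _ = lam * finExp q (fun ζ => f ζ * f ζ) := by rw [h4, h5]
  -- put together
  have hmu : finExp q f = 0 := by
    have h1 := tower (q := q) (tA parent a) f
    rw [← h1, finExp_congr h0, finExp_const]
  have hsq : finExp q (fun ζ => f ζ ^ 2) = finExp q (fun ζ => f ζ * f ζ) :=
    finExp_congr fun ζ => by ring
  have hpos : 0 < finExp q (fun ζ => f ζ ^ 2) := by
    have h1 : finVar q f = finExp q (fun ζ => f ζ ^ 2) := by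
      unfold finVar
      rw [hmu]
      ring
    rw [← h1]
    exact finVar_pos hq0 hq1 hfnc
  have hfinal : gA * finExp q (fun ζ => f ζ ^ 2) ≤ lam * finExp q (fun ζ => f ζ ^ 2) := by
    rw [hsq]
    calc gA * finExp q (fun ζ => f ζ * f ζ)
        = finExp q (fun ω => gA * finVar q (fun σ : {y // y ∈ A} → Bool => f (patch A σ ω))) := by
          rw [hL, hsq]
      _ ≤ finExp q (fun ω => finDir q (treeEastC parent r A) (fun σ => f (patch A σ ω))) := hInt
      _ ≤ lam * finExp q (fun ζ => f ζ * f ζ) := hR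
  exact le_of_mul_le_mul_right hfinal hpos

lemma key_dichotomy (hq0 : 0 < q) (hq1 : q < 1)
    (hroot : parent r = r) (hreach : ∀ x, ∃ n : ℕ, parent^[n] x = r)
    (hchild : parent a = v) (hav : a ≠ v)
    (f : (V → Bool) → ℝ) (lam : ℝ)
    (hE : ∀ ω, Lneg q (cF parent r) f ω = lam * f ω)
    (hfnc : ∃ ω ω', f ω ≠ f ω') :
    min (finGap q (treeEastC parent r (asetD parent v a)))
      (finGap q (treeEastC parent r (bsetD parent a))) ≤ lam := by
  have hpq : (1 - q) * q ≠ 0 := by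
    have : 0 < 1 - q := by linarith
    positivity
  -- lam ≠ 0
  have hlam0 : lam ≠ 0 := by
    intro hl
    subst hl
    have hdir : finDir q (cF parent r) f = 0 := by
      rw [dir_eq (cF parent r) (fun x ω b => HCfull parent r hreach x ω b) f]
      have : ∀ ω, f ω * Lneg q (cF parent r) f ω = 0 := fun ω => by
        rw [hE ω]; ring
      rw [finExp_congr this, finExp_const]
    have hterm : ∀ x : V, finExp q (fun ω => ind (cF parent r x ω) * varAt q f x ω) = 0 := by
      intro x
      refine (Finset.sum_eq_zero_iff_of_nonneg fun y _ => ?_).1 hdir x (Finset.mem_univ x)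
      exact finExp_nonneg hq0 hq1 fun ζ =>
        mul_nonneg (ind_nonneg _) (varAt_nonneg hq0 hq1 f y ζ)
    have hpt : ∀ x ω, ind (cF parent r x ω) * varAt q f x ω = 0 := fun x ω =>
      finExp_eq_zero hq0 hq1 (fun ζ =>
        mul_nonneg (ind_nonneg _) (varAt_nonneg hq0 hq1 f x ζ)) (hterm x) ω
    have hflip : ∀ x ω, cF parent r x ω →
        f (Function.update ω x true) = f (Function.update ω x false) := by
      intro x ω hc
      have h1 := hpt x ω
      rw [show ind (cF parent r x ω) = 1 from by unfold ind; rw [if_pos hc], one_mul] at h1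
      unfold varAt at h1
      have h2 : (f (Function.update ω x true) - f (Function.update ω x false)) ^ 2 = 0 := by
        by_contra hne
        exact hne (by
          have := mul_eq_zero.1 h1
          rcases this with h | h
          · exact absurd h hpq
          · exact h)
      have h3 := pow_eq_zero_iff (n := 2) (by norm_num) |>.1 h2
      linarith [sub_eq_zero.1 h3]
    obtain ⟨ω, ω', hne⟩ := hfnc
    exact hne (ergodic parent r hreach f hflip ω ω')
  -- finExp f = 0
  have hmu : finExp q f = 0 := by
    have h1 : finExp q (fun ω => Lneg q (cF parent r) f ω) = 0 := by
      have e1 : finExp q (fun ω => Lneg q (cF parent r) f ω)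
          = finExp q (fun ω => (fun _ : V → Bool => (1:ℝ)) ω * Lneg q (cF parent r) f ω) :=
        finExp_congr fun ω => by ring
      rw [e1, sym_lneg (cF parent r) (fun x ω b => HCfull parent r hreach x ω b) f
        (fun _ => (1:ℝ))]
      have e2 : ∀ ω, f ω * Lneg q (cF parent r) (fun _ => (1:ℝ)) ω = 0 := fun ω => by
        rw [lneg_const]; ring
      rw [finExp_congr e2, finExp_const]
    have h2 : finExp q (fun ω => Lneg q (cF parent r) f ω) = lam * finExp q f := by
      rw [finExp_congr hE, finExp_smul]
    rw [h2] at h1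
    exact (mul_eq_zero.1 h1).resolve_left hlam0
  by_cases hg : ∃ ω ω', avg q (tA parent a) f ω ≠ avg q (tA parent a) f ω'
  · -- case B : the conditional average is non-constant
    set g : (V → Bool) → ℝ := avg q (tA parent a) f with hgdef
    have hloc : ∀ ω ω', (∀ y ∈ bsetD parent a, ω y = ω' y) → g ω = g ω' := by
      intro ω ω' h
      exact avg_local (tA parent a) f fun x hx => h x ((mem_bsetD parent a).2 hx)
    set ωd : V → Bool := fun _ => true with hωd
    have hvar := conv_var (q := q) (bsetD parent a) g hloc ωd
    have hdir := conv_dir (q := q) parent r (bsetD parent a) (par_bset parent a) g hloc ωd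
    have hnc := conv_nonconst (bsetD parent a) g hloc ωd hg
    have hVpos : 0 < finVar q g := finVar_pos hq0 hq1 hg
    have hB := prop_B parent r a hq0 hq1 hreach f lam hE hmu
    have hγ : finDir q (treeEastC parent r (bsetD parent a))
          (fun σ => g (patch (bsetD parent a) σ ωd))
        / finVar q (fun σ : {y // y ∈ bsetD parent a} → Bool => g (patch (bsetD parent a) σ ωd))
        = lam := by
      rw [hdir, hvar, hB]
      exact mul_div_cancel_right₀ lam hVpos.ne'
    have hle := gap_le hq0 hq1 (treeEastC parent r (bsetD parent a)) hnc
    rw [hγ] at hle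
    exact le_trans (min_le_right _ _) hle
  · -- case A : the conditional average is constant, hence zero
    push_neg at hg
    have h0 : ∀ ω, avg q (tA parent a) f ω = 0 := by
      have hEg : finExp q (fun ω => avg q (tA parent a) f ω) = 0 := by
        rw [tower, hmu]
      intro ω
      have h1 : finExp q (fun ω' => avg q (tA parent a) f ω')
          = avg q (tA parent a) f ω := by
        rw [finExp_congr (g := fun _ => avg q (tA parent a) f ω) (fun ω' => hg ω' ω),
          finExp_const]
      rw [← h1, hEg]
    exact le_trans (min_le_left _ _)
      (prop_A parent r v a hq0 hq1 hreach hchild f lam hE h0 hfnc)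

end

end TE

namespace TE

open Finset Function

noncomputable section

variable {V : Type*} [Fintype V] [DecidableEq V]

/-- square root of the weight -/
def sw (q : ℝ) (ω : V → Bool) : ℝ := Real.sqrt (wt q ω)

variable {q : ℝ}

lemma sw_pos (hq0 : 0 < q) (hq1 : q < 1) (ω : V → Bool) : 0 < sw q ω :=
  Real.sqrt_pos.2 (wt_pos hq0 hq1 ω)

lemma sw_mul_self (hq0 : 0 < q) (hq1 : q < 1) (ω : V → Bool) : sw q ω * sw q ω = wt q ω :=
  Real.mul_self_sqrt (wt_nonneg hq0 hq1 ω)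

def phiE (q : ℝ) (f : (V → Bool) → ℝ) : EuclideanSpace ℝ (V → Bool) :=
  WithLp.toLp 2 (fun ω => sw q ω * f ω)

lemma phiE_apply (f : (V → Bool) → ℝ) (ω : V → Bool) : phiE q f ω = sw q ω * f ω := rfl

lemma inner_phiE (hq0 : 0 < q) (hq1 : q < 1) (f g : (V → Bool) → ℝ) :
    (inner ℝ (phiE q f) (phiE q g) : ℝ) = finExp q (fun ω => f ω * g ω) := by
  rw [PiLp.inner_apply, finExp_def]
  refine Finset.sum_congr rfl fun ω _ => ?_
  simp only [RCLike.inner_apply, starRingEnd_apply, star_trivial, phiE_apply]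
  rw [← sw_mul_self hq0 hq1 ω]
  ring

lemma phiE_psi (hq0 : 0 < q) (hq1 : q < 1) (u : EuclideanSpace ℝ (V → Bool)) :
    phiE q (fun ω => (sw q ω)⁻¹ * u ω) = u := by
  ext ω
  rw [phiE_apply]
  exact mul_inv_cancel_left₀ (sw_pos hq0 hq1 ω).ne' (u ω)

lemma psi_phiE (hq0 : 0 < q) (hq1 : q < 1) (f : (V → Bool) → ℝ) :
    (fun ω => (sw q ω)⁻¹ * phiE q f ω) = f := by
  funext ω
  rw [phiE_apply]
  exact inv_mul_cancel_left₀ (sw_pos hq0 hq1 ω).ne' (f ω)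

variable (hq0 : 0 < q) (hq1 : q < 1) (c : V → (V → Bool) → Prop)

def Mlin (hq0 : 0 < q) (hq1 : q < 1) (c : V → (V → Bool) → Prop) :
    EuclideanSpace ℝ (V → Bool) →ₗ[ℝ] EuclideanSpace ℝ (V → Bool) where
  toFun u := phiE q (Lneg q c (fun ω => (sw q ω)⁻¹ * u ω))
  map_add' u v := by
    ext ω
    have h1 : (fun ζ => (sw q ζ)⁻¹ * (u + v) ζ)
        = fun ζ => ((sw q ζ)⁻¹ * u ζ) + ((sw q ζ)⁻¹ * v ζ) := by
      funext ζ
      have : (u + v) ζ = u ζ + v ζ := rfl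
      rw [this]
      ring
    show phiE q (Lneg q c (fun ζ => (sw q ζ)⁻¹ * (u + v) ζ)) ω = _
    rw [phiE_apply]
    rw [lneg_congr c (fun ζ => congrFun h1 ζ) ω]
    rw [lneg_add c (fun ζ => (sw q ζ)⁻¹ * u ζ) (fun ζ => (sw q ζ)⁻¹ * v ζ) ω]
    show _ = phiE q (Lneg q c fun ω => (sw q ω)⁻¹ * u ω) ω
      + phiE q (Lneg q c fun ω => (sw q ω)⁻¹ * v ω) ω
    rw [phiE_apply, phiE_apply]
    ring
  map_smul' k u := by
    ext ω
    have h1 : (fun ζ => (sw q ζ)⁻¹ * (k • u) ζ)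
        = fun ζ => k * ((sw q ζ)⁻¹ * u ζ) := by
      funext ζ
      have : (k • u) ζ = k * u ζ := rfl
      rw [this]
      ring
    show phiE q (Lneg q c (fun ζ => (sw q ζ)⁻¹ * (k • u) ζ)) ω = _
    rw [phiE_apply, lneg_congr c (fun ζ => congrFun h1 ζ) ω,
      lneg_smul c k (fun ζ => (sw q ζ)⁻¹ * u ζ) ω]
    show _ = k * phiE q (Lneg q c fun ω => (sw q ω)⁻¹ * u ω) ω
    rw [phiE_apply]
    ring

lemma Mlin_phiE (f : (V → Bool) → ℝ) :
    Mlin hq0 hq1 c (phiE q f) = phiE q (Lneg q c f) := by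
  show phiE q (Lneg q c (fun ω => (sw q ω)⁻¹ * phiE q f ω)) = _
  rw [show (fun ω => (sw q ω)⁻¹ * phiE q f ω) = f from psi_phiE hq0 hq1 f]

lemma Mlin_symm (HC : ∀ x ω b, c x (Function.update ω x b) ↔ c x ω) :
    (Mlin hq0 hq1 c).IsSymmetric := by
  intro u w
  set f : (V → Bool) → ℝ := fun ω => (sw q ω)⁻¹ * u ω with hf
  set g : (V → Bool) → ℝ := fun ω => (sw q ω)⁻¹ * w ω with hg
  have hu : u = phiE q f := (phiE_psi hq0 hq1 u).symm
  have hw : w = phiE q g := (phiE_psi hq0 hq1 w).symm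
  rw [hu, hw, Mlin_phiE hq0 hq1 c f, Mlin_phiE hq0 hq1 c g]
  rw [inner_phiE hq0 hq1, inner_phiE hq0 hq1]
  have h1 : finExp q (fun ω => Lneg q c f ω * g ω)
      = finExp q (fun ω => g ω * Lneg q c f ω) := finExp_congr fun ω => by ring
  have h2 : finExp q (fun ω => f ω * Lneg q c g ω)
      = finExp q (fun ω => f ω * Lneg q c g ω) := rfl
  rw [h1, sym_lneg c HC f g]

lemma spectral_main (hq0 : 0 < q) (hq1 : q < 1) (HC : ∀ x ω b, c x (Function.update ω x b) ↔ c x ω) (m : ℝ)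
    (hkey : ∀ (g : (V → Bool) → ℝ) (lam : ℝ), (∀ ω, Lneg q c g ω = lam * g ω) →
      (∃ ω ω', g ω ≠ g ω') → m ≤ lam)
    (f : (V → Bool) → ℝ) :
    m * finVar q f ≤ finDir q c f := by
  classical
  set n := Fintype.card (V → Bool) with hn'
  have hn : Module.finrank ℝ (EuclideanSpace ℝ (V → Bool)) = n := finrank_euclideanSpace
  have hsym := Mlin_symm hq0 hq1 c HC
  set B := hsym.eigenvectorBasis hn with hB
  set μs := hsym.eigenvalues hn with hμs
  set fbar : (V → Bool) → ℝ := fun ω => f ω - finExp q f with hfbar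
  set u : EuclideanSpace ℝ (V → Bool) := phiE q fbar with hu
  have hfbar0 : finExp q fbar = 0 := by
    rw [hfbar, finExp_sub f (fun _ => finExp q f), finExp_const, sub_self]
  have hVar : finVar q f = (inner ℝ u u : ℝ) := by
    rw [hu, inner_phiE hq0 hq1, finVar_eq]
    exact finExp_congr fun ω => by rw [hfbar]; ring
  have hDir : finDir q c f = (inner ℝ u (Mlin hq0 hq1 c u) : ℝ) := by
    rw [hu, Mlin_phiE hq0 hq1 c fbar, inner_phiE hq0 hq1]
    rw [← dir_shift c f (finExp q f)]
    exact dir_eq c HC fbar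
  have hP1 : (inner ℝ u u : ℝ) = ∑ i, (inner ℝ u (B i) : ℝ) * (inner ℝ (B i) u : ℝ) :=
    (B.sum_inner_mul_inner u u).symm
  have hP2 : (inner ℝ u (Mlin hq0 hq1 c u) : ℝ)
      = ∑ i, (inner ℝ u (B i) : ℝ) * (inner ℝ (B i) (Mlin hq0 hq1 c u) : ℝ) :=
    (B.sum_inner_mul_inner u (Mlin hq0 hq1 c u)).symm
  have hBi : ∀ i, (inner ℝ (B i) (Mlin hq0 hq1 c u) : ℝ) = μs i * (inner ℝ (B i) u : ℝ) := by
    intro i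
    rw [← hsym (B i) u]
    have h1 : Mlin hq0 hq1 c (B i) = (μs i) • B i := by
      have := hsym.apply_eigenvectorBasis hn i
      rw [← hB, ← hμs] at this
      simpa using this
    rw [h1, real_inner_smul_left]
  have hterm : ∀ i, m * ((inner ℝ u (B i) : ℝ) * (inner ℝ (B i) u : ℝ))
      ≤ (inner ℝ u (B i) : ℝ) * (μs i * (inner ℝ (B i) u : ℝ)) := by
    intro i
    have hcomm : (inner ℝ u (B i) : ℝ) = (inner ℝ (B i) u : ℝ) := real_inner_comm (B i) u
    set ci : ℝ := (inner ℝ (B i) u : ℝ) with hci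
    rw [hcomm]
    by_cases hczero : ci = 0
    · rw [hczero]; ring_nf; exact le_refl 0
    · set gi : (V → Bool) → ℝ := fun ω => (sw q ω)⁻¹ * B i ω with hgi
      have hφgi : phiE q gi = B i := phiE_psi hq0 hq1 (B i)
      have heig : ∀ ω, Lneg q c gi ω = μs i * gi ω := by
        intro ω
        have h1 : Mlin hq0 hq1 c (B i) = (μs i) • B i := by
          have := hsym.apply_eigenvectorBasis hn i
          rw [← hB, ← hμs] at this
          simpa using this
        rw [← hφgi, Mlin_phiE hq0 hq1 c gi] at h1
        have h2 : sw q ω * Lneg q c gi ω = μs i * (sw q ω * gi ω) :=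
          congrArg (fun z : EuclideanSpace ℝ (V → Bool) => z ω) h1
        have hne := (sw_pos hq0 hq1 ω).ne'
        calc Lneg q c gi ω = (sw q ω)⁻¹ * (sw q ω * Lneg q c gi ω) := by
              rw [inv_mul_cancel_left₀ hne]
          _ = (sw q ω)⁻¹ * (μs i * (sw q ω * gi ω)) := by rw [h2]
          _ = μs i * gi ω := by
              field_simp
      by_cases hnc : ∃ ω ω', gi ω ≠ gi ω'
      · have hm := hkey gi (μs i) heig hnc
        have : m * (ci * ci) ≤ μs i * (ci * ci) :=
          mul_le_mul_of_nonneg_right hm (mul_self_nonneg ci)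
        calc m * (ci * ci) ≤ μs i * (ci * ci) := this
          _ = ci * (μs i * ci) := by ring
      · exfalso
        push_neg at hnc
        apply hczero
        have hgconst : ∀ ω, gi ω = gi (fun _ => true) := fun ω => hnc ω _
        have : ci = finExp q (fun ω => gi ω * fbar ω) := by
          rw [hci, ← hφgi, hu, inner_phiE hq0 hq1]
        rw [this, finExp_congr (g := fun ω => gi (fun _ => true) * fbar ω)
          (fun ω => by rw [hgconst ω]), finExp_smul, hfbar0, mul_zero]
  calc m * finVar q f = ∑ i, m * ((inner ℝ u (B i) : ℝ) * (inner ℝ (B i) u : ℝ)) := by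
        rw [hVar, hP1, Finset.mul_sum]
    _ ≤ ∑ i, (inner ℝ u (B i) : ℝ) * (μs i * (inner ℝ (B i) u : ℝ)) :=
        Finset.sum_le_sum fun i _ => hterm i
    _ = finDir q c f := by
        rw [hDir, hP2]
        exact Finset.sum_congr rfl fun i _ => by rw [hBi i]

end

end TE


open scoped Classical in
/-- Let `T` be a finite tree rooted at `r` (encoded by its parent map),
`v` any vertex, `a` a child of `v`, `Γ_v` the path from `r` to `v`, and `T_a` the subtree
rooted at `a`.  With `A := Γ_v ∪ T_a` and `B := T ∖ T_a`, the spectral gap of the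
East-on-tree model on `T` is at least the minimum of the gaps of the East-on-tree models
on `A` and on `B` (all rooted at `r`), at the same parameter `q ∈ (0,1)`. -/
theorem tree_east_gap_ge_min {V : Type*} [Fintype V] [DecidableEq V]
    (parent : V → V) (r : V) (hroot : parent r = r)
    (hreach : ∀ x, ∃ n : ℕ, parent^[n] x = r)
    (v a : V) (hchild : parent a = v) (hav : a ≠ v)
    (q : ℝ) (hq : q ∈ Set.Ioo (0 : ℝ) 1) :
    min (finGap q (treeEastC parent r
          (Finset.univ.filter (fun y => ∃ k : ℕ, parent^[k] v = y) ∪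
           Finset.univ.filter (fun y => ∃ k : ℕ, parent^[k] y = a))))
        (finGap q (treeEastC parent r
          (Finset.univ \ Finset.univ.filter (fun y => ∃ k : ℕ, parent^[k] y = a)))) ≤
      finGap q (treeEastC parent r (Finset.univ : Finset V)) := by
  classical
  obtain ⟨hq0, hq1⟩ := hq
  have hAset : (Finset.univ.filter (fun y => ∃ k : ℕ, parent^[k] v = y) ∪
      Finset.univ.filter (fun y => ∃ k : ℕ, parent^[k] y = a)) = TE.asetD parent v a := rfl
  have hBset : (Finset.univ \ Finset.univ.filter (fun y => ∃ k : ℕ, parent^[k] y = a))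
      = TE.bsetD parent a := rfl
  rw [hAset, hBset]
  set m : ℝ := min (finGap q (treeEastC parent r (TE.asetD parent v a)))
    (finGap q (treeEastC parent r (TE.bsetD parent a))) with hm
  -- the gap set of the full model is nonempty
  have hrU : r ∈ (Finset.univ : Finset V) := Finset.mem_univ r
  have hNE : { γ : ℝ | ∃ F : ({y // y ∈ (Finset.univ : Finset V)} → Bool) → ℝ,
      (∃ σ σ', F σ ≠ F σ') ∧ γ = finDir q (treeEastC parent r Finset.univ) F
        / finVar q F }.Nonempty := by
    refine ⟨_, ⟨fun σ => if σ ⟨r, hrU⟩ then (1:ℝ) else 0, ⟨fun _ => true, fun _ => false, ?_⟩, rfl⟩⟩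
    norm_num
  rw [finGap]
  refine le_csInf hNE ?_
  rintro γ ⟨F, hFnc, rfl⟩
  -- transfer F to a function on V-configurations
  set f : (V → Bool) → ℝ := fun ω => F (fun z => ω z.1) with hf
  have hfloc : ∀ ω ω', (∀ y ∈ (Finset.univ : Finset V), ω y = ω' y) → f ω = f ω' := by
    intro ω ω' h
    have : ω = ω' := funext fun x => h x (Finset.mem_univ x)
    rw [this]
  set ωd : V → Bool := fun _ => true with hωd
  have hhat : (fun σ : {y // y ∈ (Finset.univ : Finset V)} → Bool =>
      f (TE.patch Finset.univ σ ωd)) = F := by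
    funext σ
    show F (fun z => TE.patch Finset.univ σ ωd z.1) = F σ
    congr 1
    funext z
    rw [TE.patch_mem Finset.univ σ ωd z.2]
  have hVar : finVar q F = finVar q f := by
    rw [← hhat]
    exact TE.conv_var Finset.univ f hfloc ωd
  have hDir : finDir q (treeEastC parent r Finset.univ) F = finDir q (TE.cF parent r) f := by
    rw [← hhat]
    rw [TE.conv_dir parent r Finset.univ (fun x _ => Finset.mem_univ _) f hfloc ωd]
    rfl
  have hfnc : ∃ ω ω', f ω ≠ f ω' := by
    obtain ⟨σ, σ', hne⟩ := hFnc
    refine ⟨fun x => σ ⟨x, Finset.mem_univ x⟩, fun x => σ' ⟨x, Finset.mem_univ x⟩, ?_⟩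
    show F _ ≠ F _
    convert hne using 2
  have hkey : ∀ (g : (V → Bool) → ℝ) (lam : ℝ),
      (∀ ω, TE.Lneg q (TE.cF parent r) g ω = lam * g ω) → (∃ ω ω', g ω ≠ g ω') → m ≤ lam :=
    fun g lam hE hgnc =>
      TE.key_dichotomy parent r v a hq0 hq1 hroot hreach hchild hav g lam hE hgnc
  have hmain := TE.spectral_main (TE.cF parent r) hq0 hq1
    (fun x ω b => TE.HCfull parent r hreach x ω b) m hkey f
  have hVpos : 0 < finVar q f := TE.finVar_pos hq0 hq1 hfnc
  rw [hVar, hDir]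
  rw [le_div_iff₀ hVpos]
  exact hmain
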